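/- Let A_N be chosen uniformly from a 2-independent pseudo-Wigner ensemble of order N and let x ∈ ℝ^N satisfy ‖x‖ = 1. Then the random variable ξ = xᵀ A_N x satisfies E[ξ] = 0 and Var(ξ) ≤ 1/(2N). -/

import Mathlib

open Matrix Finset

noncomputable section

namespace PW

/-- `S_N`: symmetric `N × N` matrices with entries `± 1/(2√N)`. -/
def IsSignMatrix (N : ℕ) (A : Matrix (Fin N) (Fin N) ℝ) : Prop :=
  A.IsSymm ∧ ∀ i j, A i j = 1 / (2 * Real.sqrt N) ∨ A i j = -(1 / (2 * Real.sqrt N))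

open Classical in
/-- An `r`-independent pseudo-Wigner ensemble of order `N`: a nonempty finite set of
matrices of `S_N`, such that under the uniform measure the upper-triangular entries
scaled by `2√N` are `r`-wise independent, uniform on `{-1, 1}`. -/
def IsPseudoWigner (N r : ℕ) (E : Finset (Matrix (Fin N) (Fin N) ℝ)) : Prop :=
  E.Nonempty ∧ (∀ A ∈ E, IsSignMatrix N A) ∧
  ∀ s : Finset (Fin N × Fin N), (∀ p ∈ s, p.1 ≤ p.2) → s.card ≤ r →
    ∀ b : Fin N × Fin N → ℝ, (∀ p, b p = 1 ∨ b p = -1) →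
      ((E.filter fun A => ∀ p ∈ s, 2 * Real.sqrt N * A p.1 p.2 = b p).card : ℝ) / E.card
        = (1 / 2 : ℝ) ^ s.card

/-- Expectation with respect to the uniform measure on a finite set. -/
def expect {α : Type*} (E : Finset α) (f : α → ℝ) : ℝ := (∑ a ∈ E, f a) / E.card

open Classical in
/-- Probability of an event with respect to the uniform measure on a finite set. -/
def prob {α : Type*} (E : Finset α) (P : α → Prop) : ℝ :=
  ((E.filter P).card : ℝ) / E.card

/-- `p`-th central moment of `f` under the uniform measure on `E`. -/
def centralMoment {α : Type*} (E : Finset α) (f : α → ℝ) (p : ℕ) : ℝ :=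
  expect E (fun a => (f a - expect E f) ^ p)

/-- The `l`-th empirical spectral moment `β_l(A) = Tr(A^l)/N`. -/
def betaMom {N : ℕ} (l : ℕ) (A : Matrix (Fin N) (Fin N) ℝ) : ℝ :=
  (A ^ l).trace / N

/-- The `l`-th moment of the standard semicircular law. -/
def scMom (l : ℕ) : ℝ :=
  ∫ x in (-1:ℝ)..1, x ^ l * (2 / Real.pi * Real.sqrt (1 - x ^ 2))

open Classical in
/-- Empirical spectral c.d.f. of a (symmetric) matrix. -/
def ecdf {N : ℕ} (A : Matrix (Fin N) (Fin N) ℝ) (x : ℝ) : ℝ :=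
  if hA : A.IsHermitian then
    ((Finset.univ.filter fun i => hA.eigenvalues i ≤ x).card : ℝ) / N
  else 0

/-- The c.d.f. of the standard semicircular law. -/
def Fsc (x : ℝ) : ℝ :=
  if x < -1 then 0
  else if x ≤ 1 then 1 / 2 + (1 / Real.pi) * x * Real.sqrt (1 - x ^ 2)
      + (1 / Real.pi) * Real.arcsin x
  else 1

/-- The symmetric sign matrix determined by sign choices on the upper triangle. -/
def signMatrixOf (N : ℕ) (s : Fin N × Fin N → Bool) : Matrix (Fin N) (Fin N) ℝ :=
  Matrix.of fun i j =>
    if i ≤ j then (if s (i, j) then 1 else -1) / (2 * Real.sqrt N)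
    else (if s (j, i) then 1 else -1) / (2 * Real.sqrt N)

/-- The Wigner ensemble `W_N`: the set `S_N` of all symmetric `±1/(2√N)` matrices
(endowed with the uniform measure). -/
def wignerFinset (N : ℕ) : Finset (Matrix (Fin N) (Fin N) ℝ) :=
  Finset.image (signMatrixOf N) Finset.univ

section aux
variable {N : ℕ} {E : Finset (Matrix (Fin N) (Fin N) ℝ)}

lemma sqrtN_sq (hN : 0 < N) : (2 * Real.sqrt N) * (2 * Real.sqrt N) = 4 * N := by
  have h : Real.sqrt N * Real.sqrt N = N := Real.mul_self_sqrt (by positivity)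
  nlinarith [h]

lemma sqrtN_pos (hN : 0 < N) : (0:ℝ) < Real.sqrt N :=
  Real.sqrt_pos.2 (by exact_mod_cast hN)

lemma eps_pm (hN : 0 < N) {A} (hA : IsSignMatrix N A) (i j : Fin N) :
    2 * Real.sqrt N * A i j = 1 ∨ 2 * Real.sqrt N * A i j = -1 := by
  have hs : Real.sqrt N ≠ 0 := ne_of_gt (sqrtN_pos hN)
  rcases hA.2 i j with h | h <;> [left; right] <;> rw [h] <;> field_simp

lemma entry_sq (hN : 0 < N) {A} (hA : IsSignMatrix N A) (i j : Fin N) :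
    A i j * A i j = 1 / (4 * N) := by
  have hs : Real.sqrt N ≠ 0 := ne_of_gt (sqrtN_pos hN)
  have h4 := sqrtN_sq hN
  rcases hA.2 i j with h | h <;> rw [h] <;> field_simp <;> nlinarith [h4]

lemma entry_symm {A : Matrix (Fin N) (Fin N) ℝ} (hA : A.IsSymm) (i j : Fin N) :
    A i j = A j i := (hA.apply i j).symm

lemma sum_eps (hE : IsPseudoWigner N 2 E) (hN : 0 < N) (p : Fin N × Fin N)
    (hp : p.1 ≤ p.2) :
    ∑ A ∈ E, 2 * Real.sqrt N * A p.1 p.2 = 0 := by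
  classical
  obtain ⟨hne, hsign, hind⟩ := hE
  have hc : (0:ℝ) < E.card := by exact_mod_cast hne.card_pos
  have h1 := hind {p} (by simpa using hp) (by simp) (fun _ => 1) (fun _ => Or.inl rfl)
  simp only [Finset.card_singleton, pow_one] at h1
  set P : Matrix (Fin N) (Fin N) ℝ → Prop := fun A => 2 * Real.sqrt N * A p.1 p.2 = 1 with hP
  have hfilt : (E.filter fun A => ∀ q ∈ ({p} : Finset (Fin N × Fin N)),
      2 * Real.sqrt N * A q.1 q.2 = (fun _ => (1:ℝ)) q) = E.filter P := by
    apply Finset.filter_congr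
    intro A _
    simp [hP]
  rw [hfilt] at h1
  have hcard1 : ((E.filter P).card : ℝ) = E.card / 2 := by
    field_simp at h1 ⊢; linarith
  have hcard2 : ((E.filter fun A => ¬ P A).card : ℝ) = E.card / 2 := by
    have := Finset.card_filter_add_card_filter_not (s := E) (p := P)
    have h2 : ((E.filter P).card : ℝ) + ((E.filter fun A => ¬ P A).card : ℝ) = E.card := by
      exact_mod_cast this
    linarith
  rw [← Finset.sum_filter_add_sum_filter_not E P]
  have e1 : ∑ A ∈ E.filter P, 2 * Real.sqrt N * A p.1 p.2 = ((E.filter P).card : ℝ) := by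
    rw [Finset.sum_congr rfl (fun A hA => (Finset.mem_filter.1 hA).2), Finset.sum_const,
      nsmul_eq_mul, mul_one]
  have e2 : ∑ A ∈ E.filter (fun A => ¬ P A), 2 * Real.sqrt N * A p.1 p.2
      = -(((E.filter fun A => ¬ P A).card : ℝ)) := by
    have : ∀ A ∈ E.filter (fun A => ¬ P A), 2 * Real.sqrt N * A p.1 p.2 = -1 := by
      intro A hA
      obtain ⟨hAE, hnP⟩ := Finset.mem_filter.1 hA
      rcases eps_pm hN (hsign A hAE) p.1 p.2 with h | h
      · exact absurd h hnP
      · exact h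
    rw [Finset.sum_congr rfl this, Finset.sum_const, nsmul_eq_mul]
    ring
  rw [e1, e2, hcard1, hcard2]; ring

lemma sum_entry (hE : IsPseudoWigner N 2 E) (i j : Fin N) :
    ∑ A ∈ E, A i j = 0 := by
  have hN : 0 < N := i.pos
  have hs : (2 * Real.sqrt N) ≠ 0 := by
    have := sqrtN_pos hN; positivity
  have key : ∀ (a b : Fin N), a ≤ b → ∑ A ∈ E, A a b = 0 := by
    intro a b hab
    have := sum_eps hE hN (a, b) hab
    rw [← Finset.mul_sum] at this
    exact (mul_eq_zero.1 this).resolve_left hs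
  rcases le_total i j with h | h
  · exact key i j h
  · have hsym : ∀ A ∈ E, A i j = A j i := fun A hA => entry_symm (hE.2.1 A hA).1 i j
    rw [Finset.sum_congr rfl hsym]
    exact key j i h

lemma sum_eps_pair (hE : IsPseudoWigner N 2 E) (hN : 0 < N) (p q : Fin N × Fin N)
    (hp : p.1 ≤ p.2) (hq : q.1 ≤ q.2) (hpq : p ≠ q) :
    ∑ A ∈ E, (2 * Real.sqrt N * A p.1 p.2) * (2 * Real.sqrt N * A q.1 q.2) = 0 := by
  classical
  obtain ⟨hne, hsign, hind⟩ := hE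
  have hc : (0:ℝ) < E.card := by exact_mod_cast hne.card_pos
  have hcard : ∀ bp bq : ℝ, bp = 1 ∨ bp = -1 → bq = 1 ∨ bq = -1 →
      ((E.filter fun A => 2 * Real.sqrt N * A p.1 p.2 = bp ∧
        2 * Real.sqrt N * A q.1 q.2 = bq).card : ℝ) = E.card / 4 := by
    intro bp bq hbp hbq
    have h := hind {p, q} (by
        intro r hr
        rcases Finset.mem_insert.1 hr with h | h
        · exact h ▸ hp
        · exact (Finset.mem_singleton.1 h) ▸ hq)
      (by rw [Finset.card_pair hpq])
      (fun r => if r = p then bp else bq)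
      (by intro r; split_ifs <;> tauto)
    rw [Finset.card_pair hpq] at h
    have hfilt : (E.filter fun A => ∀ r ∈ ({p, q} : Finset (Fin N × Fin N)),
        2 * Real.sqrt N * A r.1 r.2 = (if r = p then bp else bq))
        = E.filter (fun A => 2 * Real.sqrt N * A p.1 p.2 = bp ∧
            2 * Real.sqrt N * A q.1 q.2 = bq) := by
      apply Finset.filter_congr
      intro A _
      rw [Finset.forall_mem_insert]
      simp [Ne.symm hpq]
    rw [hfilt] at h
    have h' : ((E.filter fun A => 2 * Real.sqrt N * A p.1 p.2 = bp ∧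
        2 * Real.sqrt N * A q.1 q.2 = bq).card : ℝ) / E.card = 1/4 := by
      rw [h]; norm_num
    field_simp at h' ⊢
    linarith
  have cPQ := hcard 1 1 (Or.inl rfl) (Or.inl rfl)
  have cPnQ : ((E.filter fun A => 2 * Real.sqrt N * A p.1 p.2 = 1 ∧
      ¬ (2 * Real.sqrt N * A q.1 q.2 = 1)).card : ℝ) = E.card / 4 := by
    rw [show (E.filter fun A => 2 * Real.sqrt N * A p.1 p.2 = 1 ∧
        ¬ (2 * Real.sqrt N * A q.1 q.2 = 1))
        = E.filter (fun A => 2 * Real.sqrt N * A p.1 p.2 = 1 ∧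
            2 * Real.sqrt N * A q.1 q.2 = -1) from ?_]
    · exact hcard 1 (-1) (Or.inl rfl) (Or.inr rfl)
    · apply Finset.filter_congr
      intro A hA
      have h2 := eps_pm hN (hsign A hA) q.1 q.2
      constructor
      · rintro ⟨a, b⟩; exact ⟨a, h2.resolve_left b⟩
      · rintro ⟨a, b⟩; exact ⟨a, fun h' => by rw [b] at h'; norm_num at h'⟩
  have cnPQ : ((E.filter fun A => ¬ (2 * Real.sqrt N * A p.1 p.2 = 1) ∧
      2 * Real.sqrt N * A q.1 q.2 = 1).card : ℝ) = E.card / 4 := by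
    rw [show (E.filter fun A => ¬ (2 * Real.sqrt N * A p.1 p.2 = 1) ∧
        2 * Real.sqrt N * A q.1 q.2 = 1)
        = E.filter (fun A => 2 * Real.sqrt N * A p.1 p.2 = -1 ∧
            2 * Real.sqrt N * A q.1 q.2 = 1) from ?_]
    · exact hcard (-1) 1 (Or.inr rfl) (Or.inl rfl)
    · apply Finset.filter_congr
      intro A hA
      have h1 := eps_pm hN (hsign A hA) p.1 p.2
      constructor
      · rintro ⟨a, b⟩; exact ⟨h1.resolve_left a, b⟩
      · rintro ⟨a, b⟩; exact ⟨fun h' => by rw [a] at h'; norm_num at h', b⟩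
  have cnPnQ : ((E.filter fun A => ¬ (2 * Real.sqrt N * A p.1 p.2 = 1) ∧
      ¬ (2 * Real.sqrt N * A q.1 q.2 = 1)).card : ℝ) = E.card / 4 := by
    rw [show (E.filter fun A => ¬ (2 * Real.sqrt N * A p.1 p.2 = 1) ∧
        ¬ (2 * Real.sqrt N * A q.1 q.2 = 1))
        = E.filter (fun A => 2 * Real.sqrt N * A p.1 p.2 = -1 ∧
            2 * Real.sqrt N * A q.1 q.2 = -1) from ?_]
    · exact hcard (-1) (-1) (Or.inr rfl) (Or.inr rfl)
    · apply Finset.filter_congr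
      intro A hA
      have h1 := eps_pm hN (hsign A hA) p.1 p.2
      have h2 := eps_pm hN (hsign A hA) q.1 q.2
      constructor
      · rintro ⟨a, b⟩; exact ⟨h1.resolve_left a, h2.resolve_left b⟩
      · rintro ⟨a, b⟩
        exact ⟨fun h' => by rw [a] at h'; norm_num at h',
               fun h' => by rw [b] at h'; norm_num at h'⟩
  rw [← Finset.sum_filter_add_sum_filter_not E (fun A => 2 * Real.sqrt N * A p.1 p.2 = 1)]
  rw [← Finset.sum_filter_add_sum_filter_not
        (E.filter fun A => 2 * Real.sqrt N * A p.1 p.2 = 1)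
        (fun A => 2 * Real.sqrt N * A q.1 q.2 = 1),
      ← Finset.sum_filter_add_sum_filter_not
        (E.filter fun A => ¬ (2 * Real.sqrt N * A p.1 p.2 = 1))
        (fun A => 2 * Real.sqrt N * A q.1 q.2 = 1),
      Finset.filter_filter, Finset.filter_filter, Finset.filter_filter, Finset.filter_filter]
  have v1 : ∑ A ∈ E.filter (fun A => 2 * Real.sqrt N * A p.1 p.2 = 1 ∧
        2 * Real.sqrt N * A q.1 q.2 = 1),
      (2 * Real.sqrt N * A p.1 p.2) * (2 * Real.sqrt N * A q.1 q.2)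
      = ((E.filter fun A => 2 * Real.sqrt N * A p.1 p.2 = 1 ∧
          2 * Real.sqrt N * A q.1 q.2 = 1).card : ℝ) := by
    rw [Finset.sum_congr rfl (fun A hA => ?_), Finset.sum_const, nsmul_eq_mul, mul_one]
    obtain ⟨_, h1, h2⟩ := Finset.mem_filter.1 hA
    rw [h1, h2]; norm_num
  have v2 : ∑ A ∈ E.filter (fun A => 2 * Real.sqrt N * A p.1 p.2 = 1 ∧
        ¬ (2 * Real.sqrt N * A q.1 q.2 = 1)),
      (2 * Real.sqrt N * A p.1 p.2) * (2 * Real.sqrt N * A q.1 q.2)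
      = -((E.filter fun A => 2 * Real.sqrt N * A p.1 p.2 = 1 ∧
          ¬ (2 * Real.sqrt N * A q.1 q.2 = 1)).card : ℝ) := by
    rw [Finset.sum_congr rfl (fun A hA => ?_), Finset.sum_const, nsmul_eq_mul, mul_neg_one]
    obtain ⟨hAE, h1, h2⟩ := Finset.mem_filter.1 hA
    have h2' := (eps_pm hN (hsign A hAE) q.1 q.2).resolve_left h2
    rw [h1, h2']; norm_num
  have v3 : ∑ A ∈ E.filter (fun A => ¬ (2 * Real.sqrt N * A p.1 p.2 = 1) ∧
        2 * Real.sqrt N * A q.1 q.2 = 1),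
      (2 * Real.sqrt N * A p.1 p.2) * (2 * Real.sqrt N * A q.1 q.2)
      = -((E.filter fun A => ¬ (2 * Real.sqrt N * A p.1 p.2 = 1) ∧
          2 * Real.sqrt N * A q.1 q.2 = 1).card : ℝ) := by
    rw [Finset.sum_congr rfl (fun A hA => ?_), Finset.sum_const, nsmul_eq_mul, mul_neg_one]
    obtain ⟨hAE, h1, h2⟩ := Finset.mem_filter.1 hA
    have h1' := (eps_pm hN (hsign A hAE) p.1 p.2).resolve_left h1
    rw [h1', h2]; norm_num
  have v4 : ∑ A ∈ E.filter (fun A => ¬ (2 * Real.sqrt N * A p.1 p.2 = 1) ∧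
        ¬ (2 * Real.sqrt N * A q.1 q.2 = 1)),
      (2 * Real.sqrt N * A p.1 p.2) * (2 * Real.sqrt N * A q.1 q.2)
      = ((E.filter fun A => ¬ (2 * Real.sqrt N * A p.1 p.2 = 1) ∧
          ¬ (2 * Real.sqrt N * A q.1 q.2 = 1)).card : ℝ) := by
    rw [Finset.sum_congr rfl (fun A hA => ?_), Finset.sum_const, nsmul_eq_mul, mul_one]
    obtain ⟨hAE, h1, h2⟩ := Finset.mem_filter.1 hA
    have h1' := (eps_pm hN (hsign A hAE) p.1 p.2).resolve_left h1
    have h2' := (eps_pm hN (hsign A hAE) q.1 q.2).resolve_left h2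
    rw [h1', h2']; norm_num
  rw [v1, v2, v3, v4, cPQ, cPnQ, cnPQ, cnPnQ]
  ring

def psort {N : ℕ} (p : Fin N × Fin N) : Fin N × Fin N :=
  if p.1 ≤ p.2 then p else (p.2, p.1)

lemma psort_le (p : Fin N × Fin N) : (psort p).1 ≤ (psort p).2 := by
  unfold psort; split
  · assumption
  · exact le_of_lt (lt_of_not_ge (by assumption))

lemma psort_cases (p : Fin N × Fin N) :
    p = psort p ∨ p = ((psort p).2, (psort p).1) := by
  unfold psort; split
  · exact Or.inl rfl
  · exact Or.inr (by simp)

lemma entry_psort {A : Matrix (Fin N) (Fin N) ℝ} (hA : A.IsSymm) (p : Fin N × Fin N) :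
    A p.1 p.2 = A (psort p).1 (psort p).2 := by
  unfold psort; split
  · rfl
  · exact entry_symm hA p.1 p.2

lemma mprod (x : Fin N → ℝ) (p : Fin N × Fin N) :
    x p.1 * x p.2 = x (psort p).1 * x (psort p).2 := by
  unfold psort; split
  · rfl
  · exact mul_comm _ _

lemma sum_prod_entries (hE : IsPseudoWigner N 2 E) (hN : 0 < N) (p q : Fin N × Fin N) :
    ∑ A ∈ E, A p.1 p.2 * A q.1 q.2
      = if psort q = psort p then (E.card : ℝ) / (4 * N) else 0 := by
  classical
  have hrw : ∀ A ∈ E, A p.1 p.2 * A q.1 q.2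
      = A (psort p).1 (psort p).2 * A (psort q).1 (psort q).2 := fun A hA => by
    rw [← entry_psort (hE.2.1 A hA).1 p, ← entry_psort (hE.2.1 A hA).1 q]
  rw [Finset.sum_congr rfl hrw]
  split_ifs with h
  · rw [h]
    have hsq : ∀ A ∈ E, A (psort p).1 (psort p).2 * A (psort p).1 (psort p).2
        = 1 / (4 * (N:ℝ)) := fun A hA => entry_sq hN (hE.2.1 A hA) _ _
    rw [Finset.sum_congr rfl hsq, Finset.sum_const, nsmul_eq_mul, mul_one_div]
  · have h0 := sum_eps_pair hE hN (psort p) (psort q) (psort_le p) (psort_le q)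
      (fun e => h e.symm)
    have key : (4 * (N:ℝ)) * ∑ A ∈ E, A (psort p).1 (psort p).2 * A (psort q).1 (psort q).2
        = 0 := by
      rw [Finset.mul_sum, ← h0]
      exact Finset.sum_congr rfl fun A _ => by rw [← sqrtN_sq hN]; ring
    have h4N : (4 * (N:ℝ)) ≠ 0 := by positivity
    exact (mul_eq_zero.1 key).resolve_left h4N

end aux

/-- part of Lemma 8 of the paper: for `A_N` uniform on a `2`-independent
pseudo-Wigner ensemble of order `N` and a unit vector `x ∈ ℝ^N`, the random variable
`ξ = xᵀ A_N x` has mean `0` and variance at most `1/(2N)`. -/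
theorem stmt9 (N : ℕ) (E : Finset (Matrix (Fin N) (Fin N) ℝ))
    (hE : IsPseudoWigner N 2 E) (x : Fin N → ℝ) (hx : ∑ i, x i ^ 2 = 1) :
    expect E (fun A => x ⬝ᵥ A.mulVec x) = 0 ∧
    centralMoment E (fun A => x ⬝ᵥ A.mulVec x) 2 ≤ 1 / (2 * N) := by
  classical
  have hne := hE.1
  have hc : (0:ℝ) < E.card := by exact_mod_cast hne.card_pos
  have hfA : ∀ A : Matrix (Fin N) (Fin N) ℝ,
      x ⬝ᵥ A.mulVec x = ∑ p : Fin N × Fin N, x p.1 * A p.1 p.2 * x p.2 := by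
    intro A
    rw [Fintype.sum_prod_type]
    simp only [dotProduct, Matrix.mulVec, Finset.mul_sum]
    exact Finset.sum_congr rfl fun i _ => Finset.sum_congr rfl fun j _ => by ring
  have hmean : expect E (fun A => x ⬝ᵥ A.mulVec x) = 0 := by
    unfold expect
    have hsum : ∑ A ∈ E, x ⬝ᵥ A.mulVec x = 0 := by
      rw [Finset.sum_congr rfl fun A _ => hfA A, Finset.sum_comm]
      apply Finset.sum_eq_zero
      intro p _
      have hpull : ∑ A ∈ E, x p.1 * A p.1 p.2 * x p.2
          = x p.1 * x p.2 * ∑ A ∈ E, A p.1 p.2 := by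
        rw [Finset.mul_sum]; exact Finset.sum_congr rfl fun A _ => by ring
      rw [hpull, sum_entry hE p.1 p.2, mul_zero]
    rw [hsum, zero_div]
  refine ⟨hmean, ?_⟩
  unfold centralMoment
  rw [hmean]
  simp only [sub_zero]
  unfold expect
  rcases Nat.eq_zero_or_pos N with h0 | hN
  · subst h0
    have hz : ∀ A : Matrix (Fin 0) (Fin 0) ℝ, x ⬝ᵥ A.mulVec x = 0 := by
      intro A; rw [hfA]; simp
    simp [hz]
  · have hNR : (0:ℝ) < N := by exact_mod_cast hN
    have key : ∑ A ∈ E, (x ⬝ᵥ A.mulVec x) ^ 2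
        = ∑ p : Fin N × Fin N, ∑ q : Fin N × Fin N,
            (x p.1 * x p.2) * (x q.1 * x q.2) *
              (if psort q = psort p then (E.card : ℝ) / (4 * N) else 0) := by
      have step1 : ∀ A ∈ E, (x ⬝ᵥ A.mulVec x) ^ 2
          = ∑ p : Fin N × Fin N, ∑ q : Fin N × Fin N,
              (x p.1 * x p.2) * (x q.1 * x q.2) * (A p.1 p.2 * A q.1 q.2) := by
        intro A _
        rw [hfA, sq, Finset.sum_mul_sum]
        exact Finset.sum_congr rfl fun p _ => Finset.sum_congr rfl fun q _ => by ring
      rw [Finset.sum_congr rfl step1, Finset.sum_comm]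
      refine Finset.sum_congr rfl fun p _ => ?_
      rw [Finset.sum_comm]
      refine Finset.sum_congr rfl fun q _ => ?_
      rw [← Finset.mul_sum, sum_prod_entries hE hN p q]
    rw [key]
    have hbound : ∀ p : Fin N × Fin N,
        ∑ q : Fin N × Fin N, (x p.1 * x p.2) * (x q.1 * x q.2) *
            (if psort q = psort p then (E.card : ℝ) / (4 * N) else 0)
          ≤ 2 * ((x p.1 * x p.2) ^ 2 * ((E.card : ℝ) / (4 * N))) := by
      intro p
      have hterm : ∀ q : Fin N × Fin N, (x p.1 * x p.2) * (x q.1 * x q.2) *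
          (if psort q = psort p then (E.card : ℝ) / (4 * N) else 0)
          = if psort q = psort p
              then (x p.1 * x p.2) ^ 2 * ((E.card : ℝ) / (4 * N)) else 0 := by
        intro q
        split_ifs with h
        · have hm : x q.1 * x q.2 = x p.1 * x p.2 := by
            rw [mprod x q, h, ← mprod x p]
          rw [hm]; ring
        · ring
      rw [Finset.sum_congr rfl fun q _ => hterm q, ← Finset.sum_filter,
        Finset.sum_const, nsmul_eq_mul]
      have hK : (0:ℝ) ≤ (x p.1 * x p.2) ^ 2 * ((E.card : ℝ) / (4 * N)) := by positivity
      have hcard2 : (((Finset.univ.filter fun q => psort q = psort p).card : ℕ) : ℝ) ≤ 2 := by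
        have hsub : (Finset.univ.filter fun q => psort q = psort p)
            ⊆ {psort p, ((psort p).2, (psort p).1)} := by
          intro q hq
          have hq' := (Finset.mem_filter.1 hq).2
          rcases psort_cases q with h | h
          · rw [h, hq']; exact Finset.mem_insert_self _ _
          · rw [h, hq']; exact Finset.mem_insert_of_mem (Finset.mem_singleton_self _)
        have h1 := Finset.card_le_card hsub
        have h2 : ({psort p, ((psort p).2, (psort p).1)} : Finset (Fin N × Fin N)).card ≤ 2 :=
          le_trans (Finset.card_insert_le _ _) (by simp)
        exact_mod_cast le_trans h1 h2
      exact mul_le_mul_of_nonneg_right hcard2 hK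
    have hsumsq : ∑ p : Fin N × Fin N, (x p.1 * x p.2) ^ 2 = 1 := by
      rw [Fintype.sum_prod_type]
      have hin : ∀ i : Fin N, ∑ j, (x i * x j) ^ 2 = x i ^ 2 * ∑ j, x j ^ 2 := by
        intro i; rw [Finset.mul_sum]; exact Finset.sum_congr rfl fun j _ => by ring
      rw [Finset.sum_congr rfl fun i _ => hin i]
      simp only [hx, mul_one]
    have htotal : ∑ p : Fin N × Fin N, 2 * ((x p.1 * x p.2) ^ 2 * ((E.card : ℝ) / (4 * N)))
        = (E.card : ℝ) / (2 * N) := by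
      have hpull : ∑ p : Fin N × Fin N, 2 * ((x p.1 * x p.2) ^ 2 * ((E.card : ℝ) / (4 * N)))
          = (∑ p : Fin N × Fin N, (x p.1 * x p.2) ^ 2) * (2 * ((E.card : ℝ) / (4 * N))) := by
        rw [Finset.sum_mul]; exact Finset.sum_congr rfl fun p _ => by ring
      rw [hpull, hsumsq, one_mul]
      field_simp
      ring
    have hfinal : (∑ p : Fin N × Fin N, ∑ q : Fin N × Fin N,
        (x p.1 * x p.2) * (x q.1 * x q.2) *
          (if psort q = psort p then (E.card : ℝ) / (4 * N) else 0))
        ≤ (E.card : ℝ) / (2 * N) := by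
      rw [← htotal]
      exact Finset.sum_le_sum fun p _ => hbound p
    calc (∑ p : Fin N × Fin N, ∑ q : Fin N × Fin N,
        (x p.1 * x p.2) * (x q.1 * x q.2) *
          (if psort q = psort p then (E.card : ℝ) / (4 * N) else 0)) / E.card
        ≤ ((E.card : ℝ) / (2 * N)) / E.card := by gcongr
      _ = 1 / (2 * N) := by
          field_simp


end PW
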